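/- arXiv:1509.04366 — 3 statements merged into one kernel-verified Lean document; each statement's English description precedes it below -/
import Mathlib

section
/- Let $T_a, T_s, d_s > 0$ with $T_a = p\,g$, $T_s = q\,g$ for coprime positive integers $p, q$ and real $g > 0$ with $g \leq d_s \leq T_s$. Suppose an advertiser transmits at times $t_{a0} + i T_a$ ($i \in \mathbb{N}_0$) and the scanner's windows are $[j T_s - d_s, j T_s]$ ($j \in \mathbb{N}_0$, $j \geq 1$). Then for every $t_{a0} \in [0, T_s]$ there exist $i, j \in \mathbb{N}_0$ with $j T_s - d_s \leq t_{a0} + i T_a \leq j T_s$; i.e., discovery is guaranteed. -/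
/-- Discovery guarantee for commensurable intervals with common measure
`g ≤ ds`: every initial packet time is eventually captured by a scan
window. -/
theorem discovery_guaranteed_commensurable
    (Ta Ts ds g : ℝ) (p q : ℕ) (hp : 0 < p) (hq : 0 < q)
    (hcop : Nat.Coprime p q) (hg : 0 < g)
    (hTa : Ta = (p : ℝ) * g) (hTs : Ts = (q : ℝ) * g)
    (hgds : g ≤ ds) (hdsTs : ds ≤ Ts)
    (ta0 : ℝ) (h0 : 0 ≤ ta0) (h1 : ta0 ≤ Ts) :
    ∃ i j : ℕ, 1 ≤ j ∧
      (j : ℝ) * Ts - ds ≤ ta0 + (i : ℝ) * Ta ∧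
      ta0 + (i : ℝ) * Ta ≤ (j : ℝ) * Ts := by
  haveI : NeZero q := ⟨hq.ne'⟩
  set m : ℕ := ⌊ta0 / g⌋₊ with hm
  have hm1 : (m : ℝ) * g ≤ ta0 := by
    have := Nat.floor_le (by positivity : (0:ℝ) ≤ ta0 / g)
    rw [← hm] at this
    calc (m : ℝ) * g ≤ (ta0 / g) * g := by nlinarith
    _ = ta0 := by field_simp
  have hm2 : ta0 ≤ ((m : ℝ) + 1) * g := by
    have := Nat.lt_floor_add_one (ta0 / g)
    rw [← hm] at this
    nlinarith [div_lt_iff₀ hg |>.mp this]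
  -- choose i with i * p ≡ -(m+1) [ZMod q]
  have hu : IsUnit (p : ZMod q) := (ZMod.isUnit_iff_coprime p q).mpr hcop
  set x : ZMod q := -((m : ZMod q) + 1) * (p : ZMod q)⁻¹ with hx
  set i : ℕ := x.val with hi
  have hxi : (i : ZMod q) = x := by
    rw [hi, ZMod.natCast_val, ZMod.cast_id]
  have hdvd : q ∣ m + 1 + i * p := by
    have hiv : (p : ZMod q)⁻¹ * (p : ZMod q) = 1 := ZMod.inv_mul_of_unit _ hu
    have hz : ((m + 1 + i * p : ℕ) : ZMod q) = 0 := by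
      push_cast
      rw [hxi, hx, mul_assoc, hiv]
      ring
    exact (ZMod.natCast_eq_zero_iff _ _).mp hz
  obtain ⟨j, hj⟩ := hdvd
  have hjpos : 1 ≤ j := by
    rcases Nat.eq_zero_or_pos j with h | h
    · subst h; omega
    · exact h
  refine ⟨i, j, hjpos, ?_, ?_⟩
  · have : (j : ℝ) * q = (m : ℝ) + 1 + i * p := by
      have := congrArg (fun n : ℕ => (n : ℝ)) hj
      push_cast at this
      linarith
    rw [hTa, hTs]
    nlinarith
  · have : (j : ℝ) * q = (m : ℝ) + 1 + i * p := by
      have := congrArg (fun n : ℕ => (n : ℝ)) hj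
      push_cast at this
      linarith
    rw [hTa, hTs]
    nlinarith
end

section
/- Under the hypotheses of the previous discovery guarantee ($T_a = p g$, $T_s = q g$, $\gcd(p,q)=1$, $0 < g \leq d_s$), for every $t_{a0} \in [0, T_s]$ the minimal index $i$ at which discovery occurs satisfies $i \leq q - 1$; hence the worst-case discovery latency is at most $(q-1) \cdot T_a + d_a$ where $d_a \geq 0$ is the packet duration. -/
/-- Worst-case latency bound for commensurable intervals: discovery occurs at
some advertising index `i ≤ q - 1`, hence the worst-case discovery latency is
at most `(q - 1) * Ta + da`. -/
theorem worst_case_latency_commensurable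
    (Ta Ts ds g da : ℝ) (p q : ℕ) (hp : 0 < p) (hq : 0 < q)
    (hcop : Nat.Coprime p q) (hg : 0 < g)
    (hTa : Ta = (p : ℝ) * g) (hTs : Ts = (q : ℝ) * g)
    (hgds : g ≤ ds) (hdsTs : ds ≤ Ts) (hda : 0 ≤ da)
    (ta0 : ℝ) (h0 : 0 ≤ ta0) (h1 : ta0 ≤ Ts) :
    ∃ i j : ℕ, i ≤ q - 1 ∧ 1 ≤ j ∧
      (j : ℝ) * Ts - ds ≤ ta0 + (i : ℝ) * Ta ∧
      ta0 + (i : ℝ) * Ta ≤ (j : ℝ) * Ts ∧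
      (i : ℝ) * Ta + da ≤ ((q : ℝ) - 1) * Ta + da := by
  haveI : NeZero q := ⟨hq.ne'⟩
  set n : ℕ := (⌊ta0 / g⌋).toNat with hn
  have hfl : (n : ℝ) = ⌊ta0 / g⌋ := by
    rw [hn]
    exact_mod_cast Int.toNat_of_nonneg (Int.floor_nonneg.2 (div_nonneg h0 hg.le))
  have hng : (n : ℝ) * g ≤ ta0 := by
    have := Int.floor_le (ta0 / g)
    rw [← hfl] at this
    calc (n : ℝ) * g ≤ (ta0 / g) * g := by nlinarith
    _ = ta0 := by field_simp
  have hng2 : ta0 ≤ ((n : ℝ) + 1) * g := by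
    have := (Int.lt_floor_add_one (ta0 / g)).le
    rw [← hfl] at this
    calc ta0 = (ta0 / g) * g := by field_simp
    _ ≤ ((n : ℝ) + 1) * g := by nlinarith
  set m : ℕ := n + 1 with hm
  have hpu : IsUnit (p : ZMod q) := (ZMod.isUnit_iff_coprime p q).2 hcop
  set i : ℕ := ((-(m : ZMod q)) * (p : ZMod q)⁻¹).val with hi
  have hiq : i < q := ZMod.val_lt _
  have hdvd : q ∣ m + i * p := by
    have hz : ((m + i * p : ℕ) : ZMod q) = 0 := by
      push_cast
      rw [hi, ZMod.natCast_val, ZMod.cast_id, mul_assoc,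
        ZMod.inv_mul_of_unit _ hpu]
      push_cast
      ring
    exact (ZMod.natCast_eq_zero_iff _ _).1 hz
  obtain ⟨j, hj⟩ := hdvd
  have hj1 : 1 ≤ j := by
    rcases Nat.eq_zero_or_pos j with h | h
    · subst h; omega
    · exact h
  have key : ((n : ℝ) + 1) + (i : ℝ) * p = (q : ℝ) * j := by
    have h := congrArg (fun k : ℕ => (k : ℝ)) hj
    simp only [hm] at h
    push_cast at h
    linarith
  have hjqg : (j : ℝ) * ((q : ℝ) * g) = (((n : ℝ) + 1) + (i : ℝ) * p) * g := by
    rw [key]; ring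
  have hiq1 : (i : ℝ) + 1 ≤ (q : ℝ) := by exact_mod_cast hiq
  have hTa0 : 0 ≤ Ta := by rw [hTa]; positivity
  refine ⟨i, j, by omega, hj1, ?_, ?_, ?_⟩
  · rw [hTa, hTs]; nlinarith
  · rw [hTa, hTs]; nlinarith
  · nlinarith
end

section
/- Let $p > 0$ be a probability density on a segment split as in the growToRight() Case 1/2 with $N_u \geq N_l \geq 0$, $\gamma \leq d_s$, lengths $d_{Nu}, d_{Nl} \geq 0$ and middle part $(N_u - N_l)\gamma$, and penalty $\sigma > 0$. Then the simplified partial latency $\overline{d_p} = p\,\sigma\,\big(d_{Nl} N_l + \tfrac{1}{2}\gamma (N_u - N_l)(N_u + N_l + 1) + d_{Nu}(N_u + 1)\big)$ equals $p\,\sigma \int_l^r \lceil (T_s - d_s - t)/\gamma \rceil \, dt$ where $l, r$ are the segment endpoints, $N_l = \lceil (T_s - d_s - r)/\gamma \rceil$, $N_u = \lfloor (T_s - d_s - l)/\gamma \rfloor$, $d_{Nu} = (T_s - d_s - N_u\gamma) - l$, $d_{Nl} = r - (T_s - d_s - N_l\gamma)$, assuming $T_s - d_s - r > 0$. -/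
open intervalIntegral

private lemma ceil_mono : Monotone (fun s : ℝ => (⌈s⌉ : ℝ)) :=
  fun _ _ h => Int.cast_le.mpr (Int.ceil_le_ceil h)

private lemma ceil_integrable (a b : ℝ) :
    IntervalIntegrable (fun s : ℝ => (⌈s⌉ : ℝ)) MeasureTheory.volume a b :=
  ceil_mono.intervalIntegrable

/-- integral of ceiling over an interval within one step -/
private lemma integral_ceil_const {n : ℤ} {a b : ℝ} (h1 : (n : ℝ) - 1 ≤ a)
    (hab : a ≤ b) (h2 : b ≤ (n : ℝ)) :
    ∫ s in a..b, (⌈s⌉ : ℝ) = n * (b - a) := by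
  rw [intervalIntegral.integral_congr_ae
    (g := fun _ : ℝ => (n : ℝ)) ?_, intervalIntegral.integral_const, smul_eq_mul, mul_comm]
  filter_upwards with x hx
  rw [Set.uIoc_of_le hab] at hx
  have h : ⌈x⌉ = n := Int.ceil_eq_iff.mpr ⟨lt_of_le_of_lt h1 hx.1, hx.2.trans h2⟩
  rw [h]

private lemma integral_ceil_int (m : ℤ) : ∀ n : ℤ, m ≤ n →
    ∫ s in (m : ℝ)..(n : ℝ), (⌈s⌉ : ℝ)
      = ((n : ℝ) - m) * ((n : ℝ) + m + 1) / 2 := by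
  refine Int.le_induction ?_ ?_
  · rw [integral_ceil_const (n := m) (by linarith) le_rfl le_rfl]; ring
  · intro n hn ih
    have h1 : ∫ s in (n : ℝ)..((n + 1 : ℤ) : ℝ), (⌈s⌉ : ℝ) = (n + 1) * 1 := by
      have := integral_ceil_const (n := n + 1) (a := (n : ℝ)) (b := ((n + 1 : ℤ) : ℝ))
        (by push_cast; linarith) (by push_cast; linarith) (by push_cast; linarith)
      rw [this]; push_cast; ring
    rw [← intervalIntegral.integral_add_adjacent_intervals (b := (n : ℝ))
      (ceil_integrable _ _) (ceil_integrable _ _), ih, h1]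
    push_cast; ring

/-- Closed form for the simplified partial latency in growToRight() when
`γ ≤ ds`: the probability-weighted latency contribution equals the integral
of the step-count function over the segment. -/
theorem partial_latency_closed_form
    (Ts ds γ l r p σ : ℝ)
    (hp : 0 < p) (hσ : 0 < σ) (hγ : 0 < γ) (hγds : γ ≤ ds)
    (hlr : l < r) (hr : 0 < Ts - ds - r)
    (Nl Nu : ℤ)
    (hNl : Nl = ⌈(Ts - ds - r) / γ⌉)
    (hNu : Nu = ⌊(Ts - ds - l) / γ⌋)
    (hNl0 : 0 ≤ Nl) (hNlNu : Nl ≤ Nu)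
    (dNu dNl : ℝ)
    (hdNu : dNu = (Ts - ds - (Nu : ℝ) * γ) - l)
    (hdNl : dNl = r - (Ts - ds - (Nl : ℝ) * γ))
    (hdNu0 : 0 ≤ dNu) (hdNl0 : 0 ≤ dNl) :
    p * σ * (dNl * (Nl : ℝ) +
        (1 / 2) * γ * ((Nu : ℝ) - (Nl : ℝ)) * ((Nu : ℝ) + (Nl : ℝ) + 1) +
        dNu * ((Nu : ℝ) + 1))
      = p * σ * ∫ t in l..r, (⌈(Ts - ds - t) / γ⌉ : ℝ) := by
  set u := Ts - ds with hu
  set a := (u - r) / γ with ha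
  set b := (u - l) / γ with hb
  have hγ' : γ ≠ 0 := ne_of_gt hγ
  -- substitution
  have hsub : ∫ t in l..r, (⌈(Ts - ds - t) / γ⌉ : ℝ)
      = γ * ∫ s in a..b, (⌈s⌉ : ℝ) := by
    have h1 : ∫ t in l..r, (⌈(u - t) / γ⌉ : ℝ)
        = ∫ x in u - r..u - l, (⌈x / γ⌉ : ℝ) :=
      intervalIntegral.integral_comp_sub_left (fun x => (⌈x / γ⌉ : ℝ)) u
    rw [← hu, h1, intervalIntegral.integral_comp_div (fun s => (⌈s⌉ : ℝ)) hγ',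
      smul_eq_mul]
  -- key facts
  have haNl : a ≤ (Nl : ℝ) := by rw [hNl]; exact Int.le_ceil _
  have hNl1 : (Nl : ℝ) - 1 ≤ a := by
    rw [hNl]; have := Int.ceil_lt_add_one (R := ℝ) ((u - r) / γ); linarith
  have hNub : (Nu : ℝ) ≤ b := by rw [hNu]; exact Int.floor_le _
  have hbNu1 : b ≤ (Nu : ℝ) + 1 := by
    rw [hNu]; have := Int.lt_floor_add_one (R := ℝ) ((u - l) / γ); linarith
  have hNlNu' : (Nl : ℝ) ≤ (Nu : ℝ) := by exact_mod_cast hNlNu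
  -- split the integral
  have hI1 : ∫ s in a..(Nl : ℝ), (⌈s⌉ : ℝ) = Nl * ((Nl : ℝ) - a) :=
    integral_ceil_const hNl1 haNl le_rfl
  have hI2 : ∫ s in (Nl : ℝ)..(Nu : ℝ), (⌈s⌉ : ℝ)
      = ((Nu : ℝ) - Nl) * ((Nu : ℝ) + Nl + 1) / 2 := integral_ceil_int Nl Nu hNlNu
  have hI3 : ∫ s in (Nu : ℝ)..b, (⌈s⌉ : ℝ) = ((Nu : ℝ) + 1) * (b - Nu) := by
    have := integral_ceil_const (n := Nu + 1) (a := (Nu : ℝ)) (b := b)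
      (by push_cast; linarith) hNub (by push_cast; linarith)
    rw [this]; push_cast; ring
  have hsplit : ∫ s in a..b, (⌈s⌉ : ℝ)
      = Nl * ((Nl : ℝ) - a) + ((Nu : ℝ) - Nl) * ((Nu : ℝ) + Nl + 1) / 2
        + ((Nu : ℝ) + 1) * (b - Nu) := by
    rw [← hI1, ← hI2, ← hI3,
      intervalIntegral.integral_add_adjacent_intervals (ceil_integrable _ _)
        (ceil_integrable _ _),
      intervalIntegral.integral_add_adjacent_intervals (ceil_integrable _ _)
        (ceil_integrable _ _)]
  -- conclude by algebra
  rw [hsub, hsplit]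
  have hdNl' : dNl = γ * ((Nl : ℝ) - a) := by
    rw [hdNl, ha]; field_simp; ring
  have hdNu' : dNu = γ * (b - (Nu : ℝ)) := by
    rw [hdNu, hb]; field_simp; ring
  rw [hdNl', hdNu']; ring
end
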